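/- arXiv:math/0503675 — 2 statements merged into one kernel-verified Lean document; each statement's English description precedes it below -/
import Mathlib

section
/- If f is a unimodal probability density on the real line (i.e., there exists x0 such that f is nondecreasing on (-∞, x0] and nonincreasing on [x0, ∞)), then the excess mass difference Δ₂ of f equals zero; that is, for every λ > 0, the supremum over pairs of disjoint intervals L₁, L₂ of Σᵢ{F(Lᵢ) − λ‖Lᵢ‖} equals the supremum over single intervals L of {F(L) − λ‖L‖}. -/
open MeasureTheory

noncomputable def excessMass (F : ℝ → ℝ) (m : ℕ) (lam : ℝ) : ℝ :=
  sSup { s : ℝ | ∃ L : Fin m → ℝ × ℝ, (∀ i, (L i).1 ≤ (L i).2) ∧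
    (∀ i j, i ≠ j → Disjoint (Set.Ioc (L i).1 (L i).2) (Set.Ioc (L j).1 (L j).2)) ∧
    s = ∑ i, (F (L i).2 - F (L i).1 - lam * ((L i).2 - (L i).1)) }

lemma Fdiff (f F : ℝ → ℝ) (hfi : Integrable f)
    (hF : ∀ x, F x = ∫ t in Set.Iic x, f t) {a b : ℝ} (hab : a ≤ b) :
    F b - F a = ∫ t in Set.Ioc a b, f t := by
  rw [hF, hF, ← Set.Iic_union_Ioc_eq_Iic hab,
    setIntegral_union (Set.Iic_disjoint_Ioc le_rfl) measurableSet_Ioc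
      hfi.integrableOn hfi.integrableOn]
  ring

lemma Fupper (f F : ℝ → ℝ) (hfi : Integrable f)
    (hF : ∀ x, F x = ∫ t in Set.Iic x, f t) {a b M : ℝ} (hab : a ≤ b)
    (h : ∀ t ∈ Set.Ioc a b, f t ≤ M) :
    F b - F a ≤ M * (b - a) := by
  rw [Fdiff f F hfi hF hab]
  calc ∫ t in Set.Ioc a b, f t ≤ ∫ _ in Set.Ioc a b, M :=
        setIntegral_mono_on hfi.integrableOn
          (integrableOn_const measure_Ioc_lt_top.ne) measurableSet_Ioc h
    _ = M * (b - a) := by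
        rw [setIntegral_const, measureReal_def, Real.volume_Ioc, smul_eq_mul,
          ENNReal.toReal_ofReal (sub_nonneg.2 hab)]
        ring

lemma Flower (f F : ℝ → ℝ) (hfi : Integrable f)
    (hF : ∀ x, F x = ∫ t in Set.Iic x, f t) {a b m : ℝ} (hab : a ≤ b)
    (h : ∀ t ∈ Set.Ioc a b, m ≤ f t) :
    m * (b - a) ≤ F b - F a := by
  rw [Fdiff f F hfi hF hab]
  calc m * (b - a) = ∫ _ in Set.Ioc a b, m := by
        rw [setIntegral_const, measureReal_def, Real.volume_Ioc, smul_eq_mul,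
          ENNReal.toReal_ofReal (sub_nonneg.2 hab)]
        ring
    _ ≤ ∫ t in Set.Ioc a b, f t :=
        setIntegral_mono_on (integrableOn_const measure_Ioc_lt_top.ne)
          hfi.integrableOn measurableSet_Ioc h

lemma Fle_one (f F : ℝ → ℝ) (hf0 : ∀ x, 0 ≤ f x) (hfi : Integrable f)
    (hf1 : ∫ x, f x = 1) (hF : ∀ x, F x = ∫ t in Set.Iic x, f t) {a b : ℝ} (hab : a ≤ b) :
    F b - F a ≤ 1 := by
  rw [Fdiff f F hfi hF hab, ← hf1]
  exact setIntegral_le_integral hfi (Filter.Eventually.of_forall hf0)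

lemma key_ineq (f F : ℝ → ℝ) (hfi : Integrable f)
    (hF : ∀ x, F x = ∫ t in Set.Iic x, f t)
    (x0 : ℝ) (hmono : MonotoneOn f (Set.Iic x0)) (hanti : AntitoneOn f (Set.Ici x0))
    (lam : ℝ) (hlam : 0 < lam) {a1 b1 a2 b2 : ℝ}
    (h1 : a1 ≤ b1) (h12 : b1 ≤ a2) (h2 : a2 ≤ b2) :
    (F b1 - F a1 - lam * (b1 - a1)) + (F b2 - F a2 - lam * (b2 - a2)) ≤
      max (F b2 - F a1 - lam * (b2 - a1))
        (max (F b1 - F a1 - lam * (b1 - a1)) (F b2 - F a2 - lam * (b2 - a2))) := by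
  rcases le_or_gt 0 (F a2 - F b1 - lam * (a2 - b1)) with hg | hg
  · exact le_max_of_le_left (by linarith)
  · have hb1a2 : b1 < a2 := by
      rcases eq_or_lt_of_le h12 with rfl | h
      · simp at hg
      · exact h
    have hkey : (F b1 - F a1 - lam * (b1 - a1)) ≤ 0 ∨
        (F b2 - F a2 - lam * (b2 - a2)) ≤ 0 := by
      rcases le_or_gt x0 b1 with hx | hx
      · -- everything from b1 on is in the antitone region
        right
        have hlow : f a2 * (a2 - b1) ≤ F a2 - F b1 :=
          Flower f F hfi hF h12 fun t ht =>
            hanti (le_trans hx ht.1.le) (le_trans hx h12) ht.2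
        have hfa2 : f a2 < lam :=
          lt_of_mul_lt_mul_right (by linarith) (sub_nonneg.2 h12)
        have hup : F b2 - F a2 ≤ f a2 * (b2 - a2) :=
          Fupper f F hfi hF h2 fun t ht =>
            hanti (le_trans hx h12) (le_trans (le_trans hx h12) ht.1.le) ht.1.le
        nlinarith [sub_nonneg.2 h2]
      rcases le_or_gt a2 x0 with hx' | hx'
      · -- everything up to a2 is in the monotone region
        left
        have hlow : f b1 * (a2 - b1) ≤ F a2 - F b1 :=
          Flower f F hfi hF h12 fun t ht =>
            hmono (le_trans h12 hx') (le_trans ht.2 hx') ht.1.le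
        have hfb1 : f b1 < lam :=
          lt_of_mul_lt_mul_right (by linarith) (sub_nonneg.2 h12)
        have hup : F b1 - F a1 ≤ f b1 * (b1 - a1) :=
          Fupper f F hfi hF h1 fun t ht =>
            hmono (le_trans ht.2 (le_trans h12 hx')) (le_trans h12 hx') ht.2
        nlinarith [sub_nonneg.2 h1]
      · -- b1 < x0 < a2 : split the gap at x0
        have hsplit : (F x0 - F b1 - lam * (x0 - b1)) < 0 ∨
            (F a2 - F x0 - lam * (a2 - x0)) < 0 := by
          by_contra hc
          push_neg at hc
          linarith [hc.1, hc.2]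
        rcases hsplit with hd | hd
        · left
          have hlow : f b1 * (x0 - b1) ≤ F x0 - F b1 :=
            Flower f F hfi hF hx.le fun t ht =>
              hmono hx.le ht.2 ht.1.le
          have hfb1 : f b1 < lam :=
            lt_of_mul_lt_mul_right (by linarith) (sub_nonneg.2 hx.le)
          have hup : F b1 - F a1 ≤ f b1 * (b1 - a1) :=
            Fupper f F hfi hF h1 fun t ht =>
              hmono (le_trans ht.2 hx.le) hx.le ht.2
          nlinarith [sub_nonneg.2 h1]
        · right
          have hlow : f a2 * (a2 - x0) ≤ F a2 - F x0 :=
            Flower f F hfi hF hx'.le fun t ht =>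
              hanti ht.1.le hx'.le ht.2
          have hfa2 : f a2 < lam :=
            lt_of_mul_lt_mul_right (by linarith) (sub_nonneg.2 hx'.le)
          have hup : F b2 - F a2 ≤ f a2 * (b2 - a2) :=
            Fupper f F hfi hF h2 fun t ht =>
              hanti hx'.le (le_trans hx'.le ht.1.le) ht.1.le
          nlinarith [sub_nonneg.2 h2]
    rcases hkey with hv | hv
    · exact le_trans (by linarith) (le_max_of_le_right (le_max_right _ _))
    · exact le_trans (by linarith) (le_max_of_le_right (le_max_left _ _))

theorem stmt0 (f F : ℝ → ℝ)
    (hf0 : ∀ x, 0 ≤ f x) (hfi : Integrable f) (hf1 : ∫ x, f x = 1)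
    (hF : ∀ x, F x = ∫ t in Set.Iic x, f t)
    (huni : ∃ x0 : ℝ, MonotoneOn f (Set.Iic x0) ∧ AntitoneOn f (Set.Ici x0)) :
    ∀ lam > 0, excessMass F 2 lam = excessMass F 1 lam := by
  obtain ⟨x0, hmono, hanti⟩ := huni
  intro lam hlam
  set S1 := { s : ℝ | ∃ L : Fin 1 → ℝ × ℝ, (∀ i, (L i).1 ≤ (L i).2) ∧
    (∀ i j, i ≠ j → Disjoint (Set.Ioc (L i).1 (L i).2) (Set.Ioc (L j).1 (L j).2)) ∧
    s = ∑ i, (F (L i).2 - F (L i).1 - lam * ((L i).2 - (L i).1)) } with hS1def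
  set S2 := { s : ℝ | ∃ L : Fin 2 → ℝ × ℝ, (∀ i, (L i).1 ≤ (L i).2) ∧
    (∀ i j, i ≠ j → Disjoint (Set.Ioc (L i).1 (L i).2) (Set.Ioc (L j).1 (L j).2)) ∧
    s = ∑ i, (F (L i).2 - F (L i).1 - lam * ((L i).2 - (L i).1)) } with hS2def
  have mem_S1 : ∀ a b : ℝ, a ≤ b → (F b - F a - lam * (b - a)) ∈ S1 := by
    intro a b hab
    exact ⟨fun _ => (a, b), fun _ => hab,
      fun i j hij => absurd (Subsingleton.elim i j) hij, by simp⟩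
  have h0S1 : (0 : ℝ) ∈ S1 :=
    ⟨fun _ => (0, 0), fun _ => le_rfl,
      fun i j hij => absurd (Subsingleton.elim i j) hij, by simp⟩
  have h0S2 : (0 : ℝ) ∈ S2 :=
    ⟨fun _ => (0, 0), fun _ => le_rfl,
      fun i j hij => by simp [Set.Ioc_self], by simp⟩
  have hbdd : ∀ m : ℕ, BddAbove { s : ℝ | ∃ L : Fin m → ℝ × ℝ, (∀ i, (L i).1 ≤ (L i).2) ∧
      (∀ i j, i ≠ j → Disjoint (Set.Ioc (L i).1 (L i).2) (Set.Ioc (L j).1 (L j).2)) ∧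
      s = ∑ i, (F (L i).2 - F (L i).1 - lam * ((L i).2 - (L i).1)) } := by
    intro m
    refine ⟨m, ?_⟩
    rintro s ⟨L, hle, -, rfl⟩
    calc ∑ i, (F (L i).2 - F (L i).1 - lam * ((L i).2 - (L i).1))
        ≤ ∑ _i : Fin m, (1 : ℝ) := by
          refine Finset.sum_le_sum fun i _ => ?_
          have h1 := Fle_one f F hf0 hfi hf1 hF (hle i)
          have h2 : 0 ≤ lam * ((L i).2 - (L i).1) :=
            mul_nonneg hlam.le (sub_nonneg.2 (hle i))
          linarith
      _ = m := by simp
  have hbdd1 : BddAbove S1 := hbdd 1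
  have hbdd2 : BddAbove S2 := hbdd 2
  show sSup S2 = sSup S1
  apply le_antisymm
  · apply Real.sSup_le
    · rintro s ⟨L, hle, hdisj, rfl⟩
      rw [Fin.sum_univ_two]
      have hm0 := mem_S1 _ _ (hle 0)
      have hm1 := mem_S1 _ _ (hle 1)
      rcases eq_or_lt_of_le (hle 0) with he0 | hne0
      · have hz : F (L 0).2 - F (L 0).1 - lam * ((L 0).2 - (L 0).1) = 0 := by
          rw [← he0]; ring
        rw [hz, zero_add]
        exact le_csSup hbdd1 hm1
      rcases eq_or_lt_of_le (hle 1) with he1 | hne1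
      · have hz : F (L 1).2 - F (L 1).1 - lam * ((L 1).2 - (L 1).1) = 0 := by
          rw [← he1]; ring
        rw [hz, add_zero]
        exact le_csSup hbdd1 hm0
      have horder : (L 0).2 ≤ (L 1).1 ∨ (L 1).2 ≤ (L 0).1 := by
        by_contra hcon
        push_neg at hcon
        obtain ⟨hA, hB⟩ := hcon
        have hx1 : min (L 0).2 (L 1).2 ∈ Set.Ioc (L 0).1 (L 0).2 :=
          ⟨lt_min hne0 hB, min_le_left _ _⟩
        have hx2 : min (L 0).2 (L 1).2 ∈ Set.Ioc (L 1).1 (L 1).2 :=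
          ⟨lt_min hA hne1, min_le_right _ _⟩
        exact Set.disjoint_left.mp (hdisj 0 1 (by decide)) hx1 hx2
      rcases horder with ho | ho
      · refine le_trans
          (key_ineq f F hfi hF x0 hmono hanti lam hlam (hle 0) ho (hle 1)) ?_
        refine max_le (le_csSup hbdd1 (mem_S1 _ _ ?_))
          (max_le (le_csSup hbdd1 hm0) (le_csSup hbdd1 hm1))
        exact le_trans (hle 0) (le_trans ho (hle 1))
      · rw [add_comm]
        refine le_trans
          (key_ineq f F hfi hF x0 hmono hanti lam hlam (hle 1) ho (hle 0)) ?_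
        refine max_le (le_csSup hbdd1 (mem_S1 _ _ ?_))
          (max_le (le_csSup hbdd1 hm1) (le_csSup hbdd1 hm0))
        exact le_trans (hle 1) (le_trans ho (hle 0))
    · exact le_csSup hbdd1 h0S1
  · refine csSup_le_csSup hbdd2 ⟨0, h0S1⟩ ?_
    rintro s ⟨L, hle, -, rfl⟩
    refine ⟨![L 0, ((L 0).2, (L 0).2)], ?_, ?_, ?_⟩
    · intro i
      fin_cases i
      · exact hle 0
      · exact le_rfl
    · intro i j hij
      fin_cases i <;> fin_cases j <;> simp_all [Set.Ioc_self]
    · rw [Fin.sum_univ_two, Fin.sum_univ_one]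
      simp
end

section
/- Mode count of the Gaussian kernel estimator is at most n: for any data X₁,…,Xₙ and bandwidth h > 0, the Gaussian kernel density estimator f̂(x) = (nh)⁻¹ Σᵢ K((x−Xᵢ)/h) has at most n local maxima. -/
open Set Polynomial

lemma aux_finite_card {S : Set ℝ} {K : ℕ}
    (h : ∀ F : Finset ℝ, ↑F ⊆ S → F.card ≤ K) : S.Finite ∧ S.ncard ≤ K := by
  have hfin : S.Finite := by
    by_contra hinf
    obtain ⟨F, hFS, hFc⟩ := Set.Infinite.exists_subset_card_eq hinf (K+1)
    have := h F hFS
    omega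
  refine ⟨hfin, ?_⟩
  have := h hfin.toFinset (by simp)
  rwa [Set.ncard_eq_toFinset_card S hfin]

lemma aux_rolle_count {f : ℝ → ℝ} (hf : ∀ x : ℝ, DifferentiableAt ℝ f x) {K : ℕ}
    (hd : {x | deriv f x = 0}.Finite) (hc : {x | deriv f x = 0}.ncard ≤ K) :
    {x : ℝ | f x = 0}.Finite ∧ {x : ℝ | f x = 0}.ncard ≤ K + 1 := by
  have hFbound : ∀ F : Finset ℝ, ↑F ⊆ {x : ℝ | f x = 0} → F.card ≤ K + 1 := by
    intro F hF
    by_contra hcard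
    push_neg at hcard
    obtain ⟨G, hGF, hGc⟩ := F.exists_subset_card_eq (by omega : K + 2 ≤ F.card)
    let e := G.orderIsoOfFin hGc
    have hmem : ∀ i : Fin (K+2), f ((e i : ℝ)) = 0 := fun i =>
      hF (hGF (e i).2)
    have key : ∀ i : Fin (K+1), ∃ z, z ∈ Ioo ((e i.castSucc : ℝ)) ((e i.succ : ℝ)) ∧ deriv f z = 0 := by
      intro i
      have hlt : ((e i.castSucc : ℝ)) < (e i.succ : ℝ) := by
        have : i.castSucc < i.succ := Fin.castSucc_lt_succ
        exact_mod_cast e.lt_iff_lt.mpr this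
      obtain ⟨c, hc1, hc2⟩ := exists_deriv_eq_zero hlt
        (fun x _ => (hf x).continuousAt.continuousWithinAt)
        (by rw [hmem, hmem])
      exact ⟨c, hc1, hc2⟩
    choose z hz1 hz2 using key
    have hzmono : StrictMono z := by
      intro i j hij
      have h1 : z i < (e i.succ : ℝ) := (hz1 i).2
      have h2 : ((e j.castSucc : ℝ)) < z j := (hz1 j).1
      have h3 : (e i.succ : ℝ) ≤ (e j.castSucc : ℝ) := by
        have : i.succ ≤ j.castSucc := by
          rw [Fin.succ_le_castSucc_iff]; exact hij
        exact_mod_cast e.le_iff_le.mpr this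
      linarith
    have hsub : ↑(Finset.image z Finset.univ) ⊆ {x : ℝ | deriv f x = 0} := by
      intro x hx
      simp only [Finset.coe_image, Finset.coe_univ, Set.image_univ] at hx
      obtain ⟨i, rfl⟩ := hx
      exact hz2 i
    have hcard2 : (Finset.image z Finset.univ).card = K + 1 := by
      rw [Finset.card_image_of_injective _ hzmono.injective]; simp
    have := Set.ncard_le_ncard hsub hd
    rw [Set.ncard_coe_finset, hcard2] at this
    omega
  exact aux_finite_card hFbound

lemma aux_const_on_Ioo {f : ℝ → ℝ} {a b c : ℝ}
    (hc : ∀ x ∈ Ioo a b, f x = c) : Ioo a b ⊆ {x | deriv f x = 0} := by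
  intro y hy
  have hev : f =ᶠ[nhds y] fun _ => c :=
    Filter.eventuallyEq_of_mem (Ioo_mem_nhds hy.1 hy.2) hc
  have : deriv f y = deriv (fun _ => c) y := hev.deriv_eq
  simpa using this

lemma aux_Ioo_infinite {a b : ℝ} (hab : a < b) : (Ioo a b).Infinite :=
  Set.infinite_coe_iff.mp (Set.Ioo.infinite hab)

lemma aux_exppoly : ∀ (N : ℕ) (s : Finset ℝ) (p : ℝ → Polynomial ℝ),
    s.Nonempty → (∀ b ∈ s, p b ≠ 0) →
    (∑ b ∈ s, ((p b).natDegree + 1)) ≤ N →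
    {x : ℝ | (∑ b ∈ s, Polynomial.eval x (p b) * Real.exp (b * x)) = 0}.Finite ∧
    {x : ℝ | (∑ b ∈ s, Polynomial.eval x (p b) * Real.exp (b * x)) = 0}.ncard + 1 ≤ N := by
  intro N
  induction N with
  | zero =>
    intro s p hs hp hsum
    exfalso
    have : 1 ≤ ∑ b ∈ s, ((p b).natDegree + 1) := by
      calc 1 ≤ s.card := Finset.card_pos.mpr hs
      _ = ∑ b ∈ s, 1 := by simp
      _ ≤ _ := Finset.sum_le_sum (fun b _ => by omega)
    omega
  | succ N IH =>
    intro s p hs hp hsum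
    classical
    set b₀ := s.min' hs with hb₀def
    have hb₀ : b₀ ∈ s := s.min'_mem hs
    set q : ℝ → Polynomial ℝ := fun b => derivative (p b) + C (b - b₀) * (p b) with hqdef
    -- key fact about q for b ≠ b₀
    have hqne : ∀ b ∈ s, b ≠ b₀ → q b ≠ 0 ∧ (q b).natDegree = (p b).natDegree := by
      intro b hbs hbne
      have hc : b - b₀ ≠ 0 := sub_ne_zero.mpr hbne
      have hpb := hp b hbs
      by_cases hdeg : (p b).natDegree = 0
      · obtain ⟨a, hpa⟩ := Polynomial.natDegree_eq_zero.mp hdeg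
        have ha : a ≠ 0 := fun h0 => hpb (by rw [← hpa, h0, map_zero])
        have hqb : q b = C ((b - b₀) * a) := by
          simp only [hqdef, ← hpa, derivative_C, zero_add, ← C_mul]
        constructor
        · rw [hqb]
          exact fun h => (mul_ne_zero hc ha) (C_eq_zero.mp h)
        · rw [hqb, ← hpa, natDegree_C, natDegree_C]
      · have h1 : (C (b - b₀) * p b).degree = (p b).degree := by
          rw [degree_C_mul hc]
        have h2 : (derivative (p b)).degree < (C (b - b₀) * p b).degree := by
          rw [h1]; exact degree_derivative_lt hpb
        have h3 : (q b).degree = (p b).degree := by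
          rw [hqdef]; simp only
          rw [degree_add_eq_right_of_degree_lt h2, h1]
        constructor
        · intro h
          rw [h, degree_zero] at h3
          exact hpb (degree_eq_bot.mp h3.symm)
        · exact natDegree_eq_of_degree_eq h3
    -- g and its derivative
    set g : ℝ → ℝ := fun x => ∑ b ∈ s, Polynomial.eval x (p b) * Real.exp ((b - b₀) * x) with hgdef
    have hg : ∀ x : ℝ, HasDerivAt g (∑ b ∈ s, Polynomial.eval x (q b) * Real.exp ((b - b₀) * x)) x := by
      intro x
      apply HasDerivAt.fun_sum
      intro b _
      have h1 : HasDerivAt (fun y => Polynomial.eval y (p b)) (Polynomial.eval x (derivative (p b))) x :=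
        (p b).hasDerivAt x
      have h2 : HasDerivAt (fun y : ℝ => Real.exp ((b - b₀) * y))
          (Real.exp ((b - b₀) * x) * (b - b₀)) x := by
        simpa using (((hasDerivAt_id x).const_mul (b - b₀)).exp)
      have := h1.mul h2
      refine this.congr_deriv ?_
      simp only [hqdef, eval_add, eval_mul, eval_C]
      ring
    -- zero sets coincide
    have hzeq : {x : ℝ | (∑ b ∈ s, Polynomial.eval x (p b) * Real.exp (b * x)) = 0}
        = {x : ℝ | g x = 0} := by
      ext x
      simp only [Set.mem_setOf_eq, hgdef]
      have hsum_eq : (∑ b ∈ s, Polynomial.eval x (p b) * Real.exp (b * x))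
          = Real.exp (b₀ * x) * ∑ b ∈ s, Polynomial.eval x (p b) * Real.exp ((b - b₀) * x) := by
        rw [Finset.mul_sum]
        apply Finset.sum_congr rfl
        intro b _
        have hexp : Real.exp (b₀ * x) * Real.exp ((b - b₀) * x) = Real.exp (b * x) := by
          rw [← Real.exp_add]; ring_nf
        rw [← hexp]; ring
      rw [hsum_eq]
      constructor
      · intro hx
        rcases mul_eq_zero.mp hx with h | h
        · exact absurd h (Real.exp_ne_zero _)
        · exact h
      · intro hx; rw [hx, mul_zero]
    set s' : Finset ℝ := s.filter (fun b => q b ≠ 0) with hs'def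
    by_cases hcase : s' = ∅
    · -- s = {b₀}, p b₀ constant, no zeros
      have hss : s = {b₀} := by
        apply Finset.eq_singleton_iff_unique_mem.mpr
        refine ⟨hb₀, fun b hbs => ?_⟩
        by_contra hbne
        have := (hqne b hbs hbne).1
        have : b ∈ s' := Finset.mem_filter.mpr ⟨hbs, this⟩
        rw [hcase] at this; exact absurd this (Finset.notMem_empty b)
      have hq0 : q b₀ = 0 := by
        by_contra hne
        have : b₀ ∈ s' := Finset.mem_filter.mpr ⟨hb₀, hne⟩
        rw [hcase] at this; exact absurd this (Finset.notMem_empty b₀)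
      have hder : derivative (p b₀) = 0 := by
        have : q b₀ = derivative (p b₀) := by simp [hqdef]
        rw [← this, hq0]
      obtain ⟨a, hpa⟩ := Polynomial.natDegree_eq_zero.mp
        (Polynomial.natDegree_eq_zero_of_derivative_eq_zero hder)
      have ha : a ≠ 0 := fun h0 => hp b₀ hb₀ (by rw [← hpa, h0, map_zero])
      have hempty : {x : ℝ | (∑ b ∈ s, Polynomial.eval x (p b) * Real.exp (b * x)) = 0} = ∅ := by
        ext x
        simp only [Set.mem_setOf_eq, Set.mem_empty_iff_false, iff_false]
        rw [hss, Finset.sum_singleton, ← hpa]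
        simp only [eval_C]
        exact mul_ne_zero ha (Real.exp_ne_zero _)
      rw [hempty]
      simp
    · -- inductive case
      have hs'ne : s'.Nonempty := Finset.nonempty_of_ne_empty hcase
      have hs's : s' ⊆ s := Finset.filter_subset _ _
      -- sum bound for s'
      have hsumq : (∑ b ∈ s', ((q b).natDegree + 1)) ≤ N := by
        set w : ℝ → ℕ := fun b => if b = b₀ then (p b).natDegree else (p b).natDegree + 1 with hwdef
        have step1 : ∀ b ∈ s', (q b).natDegree + 1 ≤ w b := by
          intro b hbs'
          obtain ⟨hbs, hqb⟩ := Finset.mem_filter.mp hbs'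
          by_cases hbne : b = b₀
          · have hqeq : q b = derivative (p b) := by simp [hqdef, hbne]
            have hnd : (p b).natDegree ≠ 0 := by
              intro h0
              obtain ⟨a, hpa⟩ := Polynomial.natDegree_eq_zero.mp h0
              rw [hqeq, ← hpa, derivative_C] at hqb
              exact hqb rfl
            have hlt := natDegree_derivative_lt hnd
            have hw : w b = (p b).natDegree := by simp [hwdef, hbne]
            rw [hqeq, hw]
            omega
          · rw [(hqne b hbs hbne).2]
            simp [hwdef, hbne]
        have step2 : (∑ b ∈ s', ((q b).natDegree + 1)) ≤ ∑ b ∈ s', w b :=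
          Finset.sum_le_sum step1
        have step3 : (∑ b ∈ s', w b) ≤ ∑ b ∈ s, w b :=
          Finset.sum_le_sum_of_subset hs's
        have step4 : (∑ b ∈ s, w b) + 1 = ∑ b ∈ s, ((p b).natDegree + 1) := by
          rw [← Finset.add_sum_erase _ w hb₀, ← Finset.add_sum_erase _ (fun b => (p b).natDegree + 1) hb₀]
          have : ∑ b ∈ s.erase b₀, w b = ∑ b ∈ s.erase b₀, ((p b).natDegree + 1) := by
            apply Finset.sum_congr rfl
            intro b hb
            have : b ≠ b₀ := Finset.ne_of_mem_erase hb
            simp [hwdef, this]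
          rw [this]
          have hw : w b₀ = (p b₀).natDegree := by simp [hwdef]
          rw [hw]
          omega
        omega
      -- reindex and apply IH
      set s'' : Finset ℝ := s'.image (fun b => b - b₀) with hs''def
      have hinj : Function.Injective (fun b : ℝ => b - b₀) := fun a b hab => by
        simpa using hab
      set p'' : ℝ → Polynomial ℝ := fun b => q (b + b₀) with hp''def
      have hs''ne : s''.Nonempty := hs'ne.image _
      have hp'' : ∀ b ∈ s'', p'' b ≠ 0 := by
        intro b hb
        obtain ⟨b', hb's', rfl⟩ := Finset.mem_image.mp hb
        simp only [hp''def, sub_add_cancel]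
        exact (Finset.mem_filter.mp hb's').2
      have hsum'' : (∑ b ∈ s'', ((p'' b).natDegree + 1)) ≤ N := by
        rw [hs''def, Finset.sum_image (fun a _ b _ hab => hinj hab)]
        simp only [hp''def, sub_add_cancel]
        exact hsumq
      obtain ⟨hTfin, hTcard⟩ := IH s'' p'' hs''ne hp'' hsum''
      -- deriv zero set of g equals the s'' exp poly zero set
      have hderiv_set : {x : ℝ | deriv g x = 0}
          = {x : ℝ | (∑ b ∈ s'', Polynomial.eval x (p'' b) * Real.exp (b * x)) = 0} := by
        ext x
        simp only [Set.mem_setOf_eq]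
        rw [(hg x).deriv]
        rw [hs''def, Finset.sum_image (fun a _ b _ hab => hinj hab)]
        simp only [hp''def, sub_add_cancel]
        rw [← Finset.sum_filter_of_ne (s := s) (p := fun b => q b ≠ 0)]
        intro b _ hval hq0
        apply hval
        rw [hq0]
        simp
      have hdiff : ∀ x : ℝ, DifferentiableAt ℝ g x := fun x => (hg x).differentiableAt
      have hN1 : 1 ≤ N := by
        have : 1 ≤ ∑ b ∈ s'', ((p'' b).natDegree + 1) := by
          calc 1 ≤ s''.card := Finset.card_pos.mpr hs''ne
          _ = ∑ b ∈ s'', 1 := by simp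
          _ ≤ _ := Finset.sum_le_sum (fun b _ => by omega)
        omega
      have hd' : {x | deriv g x = 0}.Finite := hderiv_set ▸ hTfin
      have hc' : {x | deriv g x = 0}.ncard ≤ N - 1 := by
        rw [hderiv_set]; omega
      obtain ⟨hSfin, hScard⟩ := aux_rolle_count hdiff hd' hc'
      rw [hzeq]
      exact ⟨hSfin, by omega⟩

lemma aux_between_maxima {f : ℝ → ℝ} (hf : ∀ x : ℝ, DifferentiableAt ℝ f x)
    (hZ : {x : ℝ | deriv f x = 0}.Finite) {p q : ℝ} (hpq : p < q)
    (hp : IsLocalMax f p) (hq : IsLocalMax f q) :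
    ∃ r ∈ Ioo p q, deriv f r = 0 ∧ ¬ IsLocalMax f r := by
  have hcont : ContinuousOn f (Icc p q) := fun x _ => (hf x).continuousAt.continuousWithinAt
  obtain ⟨r₀, hr₀mem, hr₀min⟩ :=
    IsCompact.exists_isMinOn isCompact_Icc (nonempty_Icc.mpr hpq.le) hcont
  have contra : ∀ a b : ℝ, a < b → (∀ x ∈ Ioo a b, f x = f r₀) → False := by
    intro a b hab hconst
    exact Set.not_infinite.mpr hZ ((aux_Ioo_infinite hab).mono (aux_const_on_Ioo hconst))
  by_cases hrp : r₀ = p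
  · exfalso
    subst hrp
    obtain ⟨ε, hε, hball⟩ := Metric.eventually_nhds_iff.mp hp
    set c := min q (r₀ + ε) with hcdef
    have hrc : r₀ < c := lt_min hpq (by linarith)
    apply contra r₀ c hrc
    intro x hx
    have h1 : f x ≤ f r₀ := hball (by
      rw [Real.dist_eq, abs_of_pos (by linarith [hx.1])]
      have : x < r₀ + ε := lt_of_lt_of_le hx.2 (min_le_right _ _)
      linarith)
    have h2 : f r₀ ≤ f x := hr₀min ⟨hx.1.le, le_trans hx.2.le (min_le_left _ _)⟩
    linarith
  · by_cases hrq : r₀ = q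
    · exfalso
      subst hrq
      obtain ⟨ε, hε, hball⟩ := Metric.eventually_nhds_iff.mp hq
      set c := max p (r₀ - ε) with hcdef
      have hrc : c < r₀ := max_lt hpq (by linarith)
      apply contra c r₀ hrc
      intro x hx
      have h1 : f x ≤ f r₀ := hball (by
        rw [Real.dist_eq, abs_of_neg (by linarith [hx.2])]
        have : r₀ - ε < x := lt_of_le_of_lt (le_max_right _ _) hx.1
        linarith)
      have h2 : f r₀ ≤ f x := hr₀min ⟨le_trans (le_max_left _ _) hx.1.le, hx.2.le⟩
      linarith
    · have hIoo : r₀ ∈ Ioo p q :=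
        ⟨lt_of_le_of_ne hr₀mem.1 (fun h => hrp h.symm), lt_of_le_of_ne hr₀mem.2 hrq⟩
      have hmin : IsLocalMin f r₀ := hr₀min.isLocalMin (Icc_mem_nhds hIoo.1 hIoo.2)
      refine ⟨r₀, hIoo, hmin.deriv_eq_zero, ?_⟩
      intro hmax
      have hev : ∀ᶠ y in nhds r₀, f y = f r₀ :=
        (hmax.and hmin).mono (fun y hy => le_antisymm hy.1 hy.2)
      obtain ⟨ε, hε, hball⟩ := Metric.eventually_nhds_iff.mp hev
      apply contra (r₀ - ε) (r₀ + ε) (by linarith)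
      intro x hx
      exact hball (by rw [Real.dist_eq, abs_lt]; constructor <;> [linarith [hx.1]; linarith [hx.2]])

lemma aux_localmax_count {f : ℝ → ℝ} (hf : ∀ x : ℝ, DifferentiableAt ℝ f x) {K : ℕ}
    (hZ : {x : ℝ | deriv f x = 0}.Finite) (hc : {x : ℝ | deriv f x = 0}.ncard ≤ 2*K+1) :
    {x : ℝ | IsLocalMax f x}.Finite ∧ {x : ℝ | IsLocalMax f x}.ncard ≤ K+1 := by
  classical
  apply aux_finite_card
  intro F hF
  by_contra hcard
  push_neg at hcard
  obtain ⟨G, hGF, hGc⟩ := F.exists_subset_card_eq (show K + 2 ≤ F.card by omega)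
  let e := G.orderIsoOfFin hGc
  have hmax : ∀ i : Fin (K+2), IsLocalMax f ((e i : ℝ)) := fun i => hF (hGF (e i).2)
  have key : ∀ i : Fin (K+1), ∃ z, z ∈ Ioo ((e i.castSucc : ℝ)) ((e i.succ : ℝ)) ∧
      deriv f z = 0 ∧ ¬ IsLocalMax f z := by
    intro i
    have hlt : ((e i.castSucc : ℝ)) < (e i.succ : ℝ) :=
      e.lt_iff_lt.mpr (Fin.castSucc_lt_succ)
    obtain ⟨r, h1, h2, h3⟩ := aux_between_maxima hf hZ hlt (hmax _) (hmax _)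
    exact ⟨r, h1, h2, h3⟩
  choose z hz1 hz2 hz3 using key
  have hzmono : StrictMono z := by
    intro i j hij
    have h1 : z i < (e i.succ : ℝ) := (hz1 i).2
    have h2 : ((e j.castSucc : ℝ)) < z j := (hz1 j).1
    have h3 : (e i.succ : ℝ) ≤ (e j.castSucc : ℝ) := by
      have : i.succ ≤ j.castSucc := by rw [Fin.succ_le_castSucc_iff]; exact hij
      exact_mod_cast e.le_iff_le.mpr this
    linarith
  set Zf : Finset ℝ := G ∪ Finset.image z Finset.univ with hZfdef
  have hdisj : Disjoint G (Finset.image z Finset.univ) := by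
    rw [Finset.disjoint_right]
    intro x hx hxG
    obtain ⟨i, _, rfl⟩ := Finset.mem_image.mp hx
    exact (hz3 i) (hF (hGF hxG))
  have hZfcard : Zf.card = 2*K + 3 := by
    rw [hZfdef, Finset.card_union_of_disjoint hdisj, hGc,
      Finset.card_image_of_injective _ hzmono.injective]
    simp only [Finset.card_univ, Fintype.card_fin]
    omega
  have hZfsub : ↑Zf ⊆ {x : ℝ | deriv f x = 0} := by
    intro x hx
    rw [hZfdef] at hx
    rcases Finset.mem_union.mp hx with h | h
    · exact (hF (hGF h)).deriv_eq_zero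
    · obtain ⟨i, _, rfl⟩ := Finset.mem_image.mp h
      exact hz2 i
  have := Set.ncard_le_ncard hZfsub hZ
  rw [Set.ncard_coe_finset, hZfcard] at this
  omega

theorem stmt19 (n : ℕ) (hn : 0 < n) (h : ℝ) (hh : 0 < h) (X : Fin n → ℝ) :
    let K : ℝ → ℝ := fun u => (Real.sqrt (2 * Real.pi))⁻¹ * Real.exp (-u ^ 2 / 2)
    let fhat : ℝ → ℝ := fun x => ((n : ℝ) * h)⁻¹ * ∑ i, K ((x - X i) / h)
    {x : ℝ | IsLocalMax fhat x}.Finite ∧ {x : ℝ | IsLocalMax fhat x}.ncard ≤ n := by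
  intro K fhat
  classical
  have hh2 : (h : ℝ)^2 ≠ 0 := pow_ne_zero 2 (ne_of_gt hh)
  have hn' : (0 : ℝ) < (n : ℝ) * h := by positivity
  set s : Finset ℝ := Finset.image X Finset.univ with hsdef
  have hsne : s.Nonempty := by
    obtain ⟨i⟩ := Fin.pos_iff_nonempty.mp hn
    exact ⟨X i, Finset.mem_image_of_mem X (Finset.mem_univ i)⟩
  set m : ℕ := s.card with hmdef
  have hm1 : 1 ≤ m := Finset.card_pos.mpr hsne
  have hmn : m ≤ n := by
    calc m ≤ Finset.univ.card := Finset.card_image_le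
    _ = n := by simp
  set d : ℝ → ℝ := fun a =>
    (((Finset.univ.filter (fun i => X i = a)).card : ℝ)) * ((n:ℝ)*h)⁻¹ *
      (Real.sqrt (2*Real.pi))⁻¹ * Real.exp (-(a^2) / (2*h^2)) with hddef
  have hdpos : ∀ a ∈ s, 0 < d a := by
    intro a ha
    obtain ⟨i, _, rfl⟩ := Finset.mem_image.mp ha
    have hcnt : 0 < (Finset.univ.filter (fun j => X j = X i)).card :=
      Finset.card_pos.mpr ⟨i, Finset.mem_filter.mpr ⟨Finset.mem_univ i, rfl⟩⟩
    have : (0:ℝ) < ((Finset.univ.filter (fun j => X j = X i)).card : ℝ) := by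
      exact_mod_cast hcnt
    have hsq : (0:ℝ) < Real.sqrt (2*Real.pi) := Real.sqrt_pos.mpr (by positivity)
    rw [hddef]
    positivity
  -- rewrite fhat as grouped sum
  have hfhat : ∀ x : ℝ, fhat x = ∑ a ∈ s, d a * Real.exp (a*x/h^2 - x^2/(2*h^2)) := by
    intro x
    show ((n : ℝ) * h)⁻¹ * ∑ i, (Real.sqrt (2 * Real.pi))⁻¹ * Real.exp (-((x - X i)/h) ^ 2 / 2)
      = _
    rw [Finset.sum_comp (fun a => (Real.sqrt (2 * Real.pi))⁻¹ * Real.exp (-((x - a)/h) ^ 2 / 2)) X]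
    rw [Finset.mul_sum]
    apply Finset.sum_congr rfl
    intro a _
    have hexp : Real.exp (-((x - a)/h) ^ 2 / 2)
        = Real.exp (-(a^2) / (2*h^2)) * Real.exp (a*x/h^2 - x^2/(2*h^2)) := by
      rw [← Real.exp_add]
      congr 1
      field_simp
      ring
    rw [nsmul_eq_mul, hexp, hddef]
    ring
  -- the exponential polynomial
  set exps : Finset ℝ := s.image (fun a => a / h^2) with hexpsdef
  have hinj : Function.Injective (fun a : ℝ => a / h^2) := fun a b hab => by
    field_simp at hab; exact hab
  set p : ℝ → Polynomial ℝ := fun b =>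
    Polynomial.C (-(d (b*h^2) / h^2)) * Polynomial.X + Polynomial.C (d (b*h^2) * (b*h^2) / h^2)
    with hpdef
  have hexpsne : exps.Nonempty := hsne.image _
  have hcoef : ∀ a ∈ s, -(d ((a/h^2)*h^2) / h^2) ≠ 0 := by
    intro a ha
    rw [div_mul_cancel₀ a hh2]
    have hda := hdpos a ha
    have hpos : 0 < d a / h^2 := div_pos hda (by positivity)
    intro h0
    rw [neg_eq_zero] at h0
    linarith
  have hpne : ∀ b ∈ exps, p b ≠ 0 := by
    intro b hb
    obtain ⟨a, ha, rfl⟩ := Finset.mem_image.mp hb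
    intro h0
    have h1 : (p (a/h^2)).natDegree = 1 := Polynomial.natDegree_linear (hcoef a ha)
    rw [h0] at h1
    simp at h1
  have hexpscard : exps.card = m := Finset.card_image_of_injective s hinj
  have hdegsum : (∑ b ∈ exps, ((p b).natDegree + 1)) ≤ 2 * m := by
    calc (∑ b ∈ exps, ((p b).natDegree + 1)) ≤ ∑ _b ∈ exps, 2 := by
          apply Finset.sum_le_sum
          intro b _
          have : (p b).natDegree ≤ 1 := Polynomial.natDegree_linear_le
          omega
    _ = 2 * exps.card := by rw [Finset.sum_const]; ring
    _ ≤ 2 * m := by omega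
  obtain ⟨hHfin, hHcard⟩ := aux_exppoly (2*m) exps p hexpsne hpne hdegsum
  have hderiv : ∀ x : ℝ, HasDerivAt fhat
      (Real.exp (-(x^2) / (2*h^2)) *
        ∑ b ∈ exps, Polynomial.eval x (p b) * Real.exp (b * x)) x := by
    intro x
    have heq : fhat = fun y => ∑ a ∈ s, d a * Real.exp (a*y/h^2 - y^2/(2*h^2)) := funext hfhat
    rw [heq]
    have hterm : ∀ a ∈ s, HasDerivAt (fun y => d a * Real.exp (a*y/h^2 - y^2/(2*h^2)))
        (d a * (Real.exp (a*x/h^2 - x^2/(2*h^2)) * (a/h^2 - x/h^2))) x := by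
      intro a _
      have h1 : HasDerivAt (fun y:ℝ => a*y/h^2) (a/h^2) x := by
        simpa using ((hasDerivAt_id x).const_mul a).div_const (h^2)
      have h2 : HasDerivAt (fun y:ℝ => y^2/(2*h^2)) (x/h^2) x := by
        have h3 := (hasDerivAt_pow 2 x).div_const (2*h^2)
        refine h3.congr_deriv ?_
        field_simp
        ring
      exact ((h1.sub h2).exp).const_mul (d a)
    have hsum := HasDerivAt.fun_sum hterm
    refine hsum.congr_deriv ?_
    rw [hexpsdef, Finset.sum_image (fun a _ b _ hab => hinj hab), Finset.mul_sum]
    apply Finset.sum_congr rfl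
    intro a _
    have hcanc : a / h^2 * h^2 = a := div_mul_cancel₀ a hh2
    have hE : Real.exp (a*x/h^2 - x^2/(2*h^2))
        = Real.exp (a/h^2 * x) * Real.exp (-(x^2) / (2*h^2)) := by
      rw [← Real.exp_add]; congr 1; ring
    simp only [hpdef, Polynomial.eval_add, Polynomial.eval_mul, Polynomial.eval_C,
      Polynomial.eval_X]
    rw [hcanc, hE]
    ring
  have hdiff : ∀ x : ℝ, DifferentiableAt ℝ fhat x := fun x => (hderiv x).differentiableAt
  have hZeq : {x : ℝ | deriv fhat x = 0}
      = {x : ℝ | (∑ b ∈ exps, Polynomial.eval x (p b) * Real.exp (b * x)) = 0} := by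
    ext x
    simp only [Set.mem_setOf_eq, (hderiv x).deriv]
    constructor
    · intro h0
      rcases mul_eq_zero.mp h0 with h0 | h0
      · exact absurd h0 (Real.exp_ne_zero _)
      · exact h0
    · intro h0; rw [h0, mul_zero]
  have hZfin : {x : ℝ | deriv fhat x = 0}.Finite := hZeq ▸ hHfin
  have hZcard : {x : ℝ | deriv fhat x = 0}.ncard ≤ 2*(m-1)+1 := by
    rw [hZeq]; omega
  obtain ⟨hMfin, hMcard⟩ := aux_localmax_count hdiff hZfin hZcard
  exact ⟨hMfin, by omega⟩
end
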